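/- For every formula A in negation normal form, the implication CNFtoPropF (MakeCNF A) → NNFtoPropF A is provable in classical natural deduction from the empty context. -/

import Mathlib

inductive PropF (V : Type) : Type
  | Var : V → PropF V
  | Bot : PropF V
  | Conj : PropF V → PropF V → PropF V
  | Disj : PropF V → PropF V → PropF V
  | Impl : PropF V → PropF V → PropF V
deriving DecidableEq

variable {V : Type} [DecidableEq V]

def PropF.Neg (A : PropF V) : PropF V := A.Impl .Bot
def PropF.Top : PropF V := PropF.Neg .Bot

def TrueQ (v : V → Bool) : PropF V → Bool
  | .Var p => v p
  | .Bot => false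
  | .Conj B C => TrueQ v B && TrueQ v C
  | .Disj B C => TrueQ v B || TrueQ v C
  | .Impl B C => !(TrueQ v B) || TrueQ v C

def Satisfies (v : V → Bool) (Γ : List (PropF V)) : Prop := ∀ A ∈ Γ, TrueQ v A = true
def Models (Γ : List (PropF V)) (A : PropF V) : Prop := ∀ v, Satisfies v Γ → TrueQ v A = true
def Valid (A : PropF V) : Prop := Models [] A
def Validates (v : V → Bool) (Δ : List (PropF V)) : Prop := ∃ A ∈ Δ, TrueQ v A = true

inductive Nc : List (PropF V) → PropF V → Prop
  | Nax (Γ : List (PropF V)) (A : PropF V) : A ∈ Γ → Nc Γ A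
  | ImpI (Γ : List (PropF V)) (A B : PropF V) : Nc (A :: Γ) B → Nc Γ (A.Impl B)
  | ImpE (Γ : List (PropF V)) (A B : PropF V) : Nc Γ (A.Impl B) → Nc Γ A → Nc Γ B
  | BotC (Γ : List (PropF V)) (A : PropF V) : Nc (A.Neg :: Γ) .Bot → Nc Γ A
  | AndI (Γ : List (PropF V)) (A B : PropF V) : Nc Γ A → Nc Γ B → Nc Γ (A.Conj B)
  | AndE1 (Γ : List (PropF V)) (A B : PropF V) : Nc Γ (A.Conj B) → Nc Γ A
  | AndE2 (Γ : List (PropF V)) (A B : PropF V) : Nc Γ (A.Conj B) → Nc Γ B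
  | OrI1 (Γ : List (PropF V)) (A B : PropF V) : Nc Γ A → Nc Γ (A.Disj B)
  | OrI2 (Γ : List (PropF V)) (A B : PropF V) : Nc Γ B → Nc Γ (A.Disj B)
  | OrE (Γ : List (PropF V)) (A B C : PropF V) : Nc Γ (A.Disj B) → Nc (A :: Γ) C → Nc (B :: Γ) C → Nc Γ C

def Provable (A : PropF V) : Prop := Nc [] A

inductive NNF (V : Type) : Type
  | NPos : V → NNF V
  | NNeg : V → NNF V
  | NBot : NNF V
  | NTop : NNF V
  | NConj : NNF V → NNF V → NNF V
  | NDisj : NNF V → NNF V → NNF V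
deriving DecidableEq

def NNFtoPropF : NNF V → PropF V
  | .NPos p => .Var p
  | .NNeg p => (PropF.Var p).Neg
  | .NBot => .Bot
  | .NTop => PropF.Top
  | .NConj B C => (NNFtoPropF B).Conj (NNFtoPropF C)
  | .NDisj B C => (NNFtoPropF B).Disj (NNFtoPropF C)

mutual
def MakeNNF : PropF V → NNF V
  | .Var p => .NPos p
  | .Bot => .NBot
  | .Disj B C => .NDisj (MakeNNF B) (MakeNNF C)
  | .Conj B C => .NConj (MakeNNF B) (MakeNNF C)
  | .Impl B C => .NDisj (MakeNNFN B) (MakeNNF C)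
def MakeNNFN : PropF V → NNF V
  | .Var p => .NNeg p
  | .Bot => .NTop
  | .Disj B C => .NConj (MakeNNFN B) (MakeNNFN C)
  | .Conj B C => .NDisj (MakeNNFN B) (MakeNNFN C)
  | .Impl B C => .NConj (MakeNNF B) (MakeNNFN C)
end

inductive Lit (V : Type) : Type
  | LPos : V → Lit V
  | LNeg : V → Lit V
  | LBot : Lit V
  | LTop : Lit V
deriving DecidableEq

def LiteraltoPropF : Lit V → PropF V
  | .LPos p => .Var p
  | .LNeg p => (PropF.Var p).Neg
  | .LBot => .Bot
  | .LTop => PropF.Top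

abbrev Clause (V : Type) : Type := List (Lit V)
abbrev CNF (V : Type) : Type := List (Clause V)

abbrev ClausetoPropF (l : Clause V) : PropF V :=
  l.foldr (fun a r => (LiteraltoPropF a).Disj r) .Bot

def CNFtoPropF (ll : CNF V) : PropF V :=
  ll.foldr (fun c r => (ClausetoPropF c).Conj r) PropF.Top

def AddClause (l : Clause V) (ll : CNF V) : CNF V := ll.map (fun l2 => l ++ l2)
def Disjunct (ll ll2 : CNF V) : CNF V := ll.flatMap (fun l => AddClause l ll2)

def MakeCNF : NNF V → CNF V
  | .NPos p => [[.LPos p]]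
  | .NNeg p => [[.LNeg p]]
  | .NBot => [[.LBot]]
  | .NTop => [[.LTop]]
  | .NConj B C => MakeCNF B ++ MakeCNF C
  | .NDisj B C => Disjunct (MakeCNF B) (MakeCNF C)

def Valid_Clause (l : Clause V) : Prop :=
  Lit.LTop ∈ l ∨ ∃ p, Lit.LPos p ∈ l ∧ Lit.LNeg p ∈ l
def Valid_CNF (ll : CNF V) : Prop := ∀ l ∈ ll, Valid_Clause l

inductive AxiomH : PropF V → Prop
  | HOrI1 (A B : PropF V) : AxiomH (A.Impl (A.Disj B))
  | HOrI2 (A B : PropF V) : AxiomH (B.Impl (A.Disj B))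
  | HAndI (A B : PropF V) : AxiomH (A.Impl (B.Impl (A.Conj B)))
  | HOrE (A B C : PropF V) : AxiomH ((A.Disj B).Impl ((A.Impl C).Impl ((B.Impl C).Impl C)))
  | HAndE1 (A B : PropF V) : AxiomH ((A.Conj B).Impl A)
  | HAndE2 (A B : PropF V) : AxiomH ((A.Conj B).Impl B)
  | HS (A B C : PropF V) : AxiomH ((A.Impl (B.Impl C)).Impl ((A.Impl B).Impl (A.Impl C)))
  | HK (A B : PropF V) : AxiomH (A.Impl (B.Impl A))
  | HClas (A : PropF V) : AxiomH ((A.Neg.Neg).Impl A)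

inductive Hc : List (PropF V) → PropF V → Prop
  | Hass (A : PropF V) (Γ : List (PropF V)) : A ∈ Γ → Hc Γ A
  | Hax (A : PropF V) (Γ : List (PropF V)) : AxiomH A → Hc Γ A
  | HImpE (Γ : List (PropF V)) (A B : PropF V) : Hc Γ (A.Impl B) → Hc Γ A → Hc Γ B

inductive G : List (PropF V) → List (PropF V) → Prop
  | Gax (A : PropF V) (Γ Δ : List (PropF V)) : A ∈ Γ → A ∈ Δ → G Γ Δ
  | GBot (Γ Δ : List (PropF V)) : PropF.Bot ∈ Γ → G Γ Δ
  | AndL (A B : PropF V) (Γ1 Γ2 Δ : List (PropF V)) : G (Γ1 ++ A :: B :: Γ2) Δ → G (Γ1 ++ (A.Conj B) :: Γ2) Δ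
  | AndR (A B : PropF V) (Γ Δ1 Δ2 : List (PropF V)) : G Γ (Δ1 ++ A :: Δ2) → G Γ (Δ1 ++ B :: Δ2) → G Γ (Δ1 ++ (A.Conj B) :: Δ2)
  | OrL (A B : PropF V) (Γ1 Γ2 Δ : List (PropF V)) : G (Γ1 ++ A :: Γ2) Δ → G (Γ1 ++ B :: Γ2) Δ → G (Γ1 ++ (A.Disj B) :: Γ2) Δ
  | OrR (A B : PropF V) (Γ Δ1 Δ2 : List (PropF V)) : G Γ (Δ1 ++ A :: B :: Δ2) → G Γ (Δ1 ++ (A.Disj B) :: Δ2)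
  | ImpL (A B : PropF V) (Γ1 Γ2 Δ : List (PropF V)) : G (Γ1 ++ B :: Γ2) Δ → G (Γ1 ++ Γ2) (A :: Δ) → G (Γ1 ++ (A.Impl B) :: Γ2) Δ
  | ImpR (A B : PropF V) (Γ Δ1 Δ2 : List (PropF V)) : G (A :: Γ) (Δ1 ++ B :: Δ2) → G Γ (Δ1 ++ (A.Impl B) :: Δ2)
  | Cut (A : PropF V) (Γ Δ : List (PropF V)) : G Γ (A :: Δ) → G (A :: Γ) Δ → G Γ Δ

inductive Gcf : List (PropF V) → List (PropF V) → Prop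
  | Gax (p : V) (Γ Δ : List (PropF V)) : PropF.Var p ∈ Γ → PropF.Var p ∈ Δ → Gcf Γ Δ
  | GBot (Γ Δ : List (PropF V)) : PropF.Bot ∈ Γ → Gcf Γ Δ
  | AndL (A B : PropF V) (Γ1 Γ2 Δ : List (PropF V)) : Gcf (Γ1 ++ A :: B :: Γ2) Δ → Gcf (Γ1 ++ (A.Conj B) :: Γ2) Δ
  | AndR (A B : PropF V) (Γ Δ1 Δ2 : List (PropF V)) : Gcf Γ (Δ1 ++ A :: Δ2) → Gcf Γ (Δ1 ++ B :: Δ2) → Gcf Γ (Δ1 ++ (A.Conj B) :: Δ2)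
  | OrL (A B : PropF V) (Γ1 Γ2 Δ : List (PropF V)) : Gcf (Γ1 ++ A :: Γ2) Δ → Gcf (Γ1 ++ B :: Γ2) Δ → Gcf (Γ1 ++ (A.Disj B) :: Γ2) Δ
  | OrR (A B : PropF V) (Γ Δ1 Δ2 : List (PropF V)) : Gcf Γ (Δ1 ++ A :: B :: Δ2) → Gcf Γ (Δ1 ++ (A.Disj B) :: Δ2)
  | ImpL (A B : PropF V) (Γ1 Γ2 Δ : List (PropF V)) : Gcf (Γ1 ++ B :: Γ2) Δ → Gcf (Γ1 ++ Γ2) (A :: Δ) → Gcf (Γ1 ++ (A.Impl B) :: Γ2) Δ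
  | ImpR (A B : PropF V) (Γ Δ1 Δ2 : List (PropF V)) : Gcf (A :: Γ) (Δ1 ++ B :: Δ2) → Gcf Γ (Δ1 ++ (A.Impl B) :: Δ2)

def BigOr (Δ : List (PropF V)) : PropF V := Δ.foldr PropF.Disj .Bot

def size : PropF V → Nat
  | .Var _ => 0
  | .Bot => 0
  | .Conj B C => (size B + size C).succ
  | .Disj B C => (size B + size C).succ
  | .Impl B C => (size B + size C).succ

def sizel (Γ : List (PropF V)) : Nat := (Γ.map size).sum
def sizes (Γ Δ : List (PropF V)) : Nat := sizel Γ + sizel Δ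

theorem Nc_weak {Γ : List (PropF V)} {A : PropF V} (h : Nc Γ A) :
    ∀ Γ', Γ ⊆ Γ' → Nc Γ' A := by
  induction h with
  | Nax Γ A hA => exact fun Γ' s => Nc.Nax _ _ (s hA)
  | ImpI Γ A B h ih => exact fun Γ' s => Nc.ImpI _ _ _ (ih _ (List.cons_subset_cons _ s))
  | ImpE Γ A B h1 h2 ih1 ih2 => exact fun Γ' s => Nc.ImpE _ _ _ (ih1 _ s) (ih2 _ s)
  | BotC Γ A h ih => exact fun Γ' s => Nc.BotC _ _ (ih _ (List.cons_subset_cons _ s))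
  | AndI Γ A B h1 h2 ih1 ih2 => exact fun Γ' s => Nc.AndI _ _ _ (ih1 _ s) (ih2 _ s)
  | AndE1 Γ A B h ih => exact fun Γ' s => Nc.AndE1 _ _ _ (ih _ s)
  | AndE2 Γ A B h ih => exact fun Γ' s => Nc.AndE2 _ _ _ (ih _ s)
  | OrI1 Γ A B h ih => exact fun Γ' s => Nc.OrI1 _ _ _ (ih _ s)
  | OrI2 Γ A B h ih => exact fun Γ' s => Nc.OrI2 _ _ _ (ih _ s)
  | OrE Γ A B C h h1 h2 ih ih1 ih2 =>
      exact fun Γ' s => Nc.OrE _ _ _ _ (ih _ s) (ih1 _ (List.cons_subset_cons _ s))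
        (ih2 _ (List.cons_subset_cons _ s))

def hyp0 {Γ : List (PropF V)} {A : PropF V} : Nc (A :: Γ) A :=
  Nc.Nax _ _ List.mem_cons_self

theorem botE {Γ : List (PropF V)} {A : PropF V} (h : Nc Γ PropF.Bot) : Nc Γ A :=
  Nc.BotC _ _ (Nc_weak h _ (List.subset_cons_self _ _))

theorem topNc {Γ : List (PropF V)} : Nc Γ (PropF.Top : PropF V) :=
  Nc.ImpI _ _ _ hyp0

theorem orCase {Γ : List (PropF V)} {A B C : PropF V}
    (d : Nc Γ (A.Disj B)) (f : Nc Γ (A.Impl C)) (g : Nc Γ (B.Impl C)) : Nc Γ C :=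
  Nc.OrE _ _ _ _ d
    (Nc.ImpE _ _ _ (Nc_weak f _ (List.subset_cons_self _ _)) hyp0)
    (Nc.ImpE _ _ _ (Nc_weak g _ (List.subset_cons_self _ _)) hyp0)

theorem clause_app (l1 l2 : Clause V) : ∀ Γ : List (PropF V),
    Nc Γ ((ClausetoPropF (l1 ++ l2)).Impl ((ClausetoPropF l1).Disj (ClausetoPropF l2))) := by
  induction l1 with
  | nil =>
      intro Γ
      exact Nc.ImpI _ _ _ (Nc.OrI2 _ _ _ hyp0)
  | cons a l1 ih =>
      intro Γ
      apply Nc.ImpI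
      refine orCase (A := LiteraltoPropF a) (B := ClausetoPropF (l1 ++ l2)) hyp0 ?_ ?_
      · exact Nc.ImpI _ _ _ (Nc.OrI1 _ _ _ (Nc.OrI1 _ _ _ hyp0))
      · apply Nc.ImpI
        refine orCase (A := ClausetoPropF l1) (B := ClausetoPropF l2)
          (Nc.ImpE _ _ _ (ih _) hyp0) ?_ ?_
        · exact Nc.ImpI _ _ _ (Nc.OrI1 _ _ _ (Nc.OrI2 _ _ _ hyp0))
        · exact Nc.ImpI _ _ _ (Nc.OrI2 _ _ _ hyp0)

theorem cnf_app1 (ll1 ll2 : CNF V) : ∀ Γ : List (PropF V),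
    Nc Γ ((CNFtoPropF (ll1 ++ ll2)).Impl (CNFtoPropF ll1)) := by
  induction ll1 with
  | nil => exact fun Γ => Nc.ImpI _ _ _ topNc
  | cons c ll1 ih =>
      intro Γ
      apply Nc.ImpI
      exact Nc.AndI _ _ _ (Nc.AndE1 _ _ (CNFtoPropF (ll1 ++ ll2)) hyp0)
        (Nc.ImpE _ _ _ (ih _) (Nc.AndE2 _ (ClausetoPropF c) _ hyp0))

theorem cnf_app2 (ll1 ll2 : CNF V) : ∀ Γ : List (PropF V),
    Nc Γ ((CNFtoPropF (ll1 ++ ll2)).Impl (CNFtoPropF ll2)) := by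
  induction ll1 with
  | nil => exact fun Γ => Nc.ImpI _ _ _ hyp0
  | cons c ll1 ih =>
      intro Γ
      apply Nc.ImpI
      exact Nc.ImpE _ _ _ (ih _) (Nc.AndE2 _ (ClausetoPropF c) _ hyp0)

theorem addclause_lem (c : Clause V) (ll : CNF V) : ∀ Γ : List (PropF V),
    Nc Γ ((CNFtoPropF (AddClause c ll)).Impl ((ClausetoPropF c).Disj (CNFtoPropF ll))) := by
  induction ll with
  | nil => exact fun Γ => Nc.ImpI _ _ _ (Nc.OrI2 _ _ _ topNc)
  | cons d ll ih =>
      intro Γ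
      apply Nc.ImpI
      refine orCase (A := ClausetoPropF c) (B := ClausetoPropF d)
        (Nc.ImpE _ _ _ (clause_app c d _)
          (Nc.AndE1 _ _ (CNFtoPropF (AddClause c ll)) hyp0)) ?_ ?_
      · exact Nc.ImpI _ _ _ (Nc.OrI1 _ _ _ hyp0)
      · apply Nc.ImpI
        refine orCase (A := ClausetoPropF c) (B := CNFtoPropF ll)
          (Nc.ImpE _ _ _ (ih _)
            (Nc.AndE2 _ (ClausetoPropF (c ++ d)) _ (Nc.Nax _ _
              (List.mem_cons.mpr (Or.inr (List.mem_cons.mpr (Or.inl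
                (by simp [CNFtoPropF, AddClause, ClausetoPropF, List.foldr_append])))))))) ?_ ?_
        · exact Nc.ImpI _ _ _ (Nc.OrI1 _ _ _ hyp0)
        · apply Nc.ImpI
          exact Nc.OrI2 _ _ _ (Nc.AndI _ _ _ (Nc.Nax _ _ (by simp)) hyp0)

theorem disjunct_lem (ll1 ll2 : CNF V) : ∀ Γ : List (PropF V),
    Nc Γ ((CNFtoPropF (Disjunct ll1 ll2)).Impl ((CNFtoPropF ll1).Disj (CNFtoPropF ll2))) := by
  induction ll1 with
  | nil => exact fun Γ => Nc.ImpI _ _ _ (Nc.OrI1 _ _ _ topNc)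
  | cons c ll1 ih =>
      intro Γ
      apply Nc.ImpI
      have hmem : CNFtoPropF (Disjunct (c :: ll1) ll2) ∈
          CNFtoPropF (Disjunct (c :: ll1) ll2) :: Γ := by simp
      have happ : CNFtoPropF (Disjunct (c :: ll1) ll2) =
          CNFtoPropF (AddClause c ll2 ++ Disjunct ll1 ll2) := by
        simp [Disjunct, List.flatMap_cons]
      refine orCase (A := CNFtoPropF ll1) (B := CNFtoPropF ll2)
        (Nc.ImpE _ _ _ (ih _)
          (Nc.ImpE _ _ _ (cnf_app2 (AddClause c ll2) (Disjunct ll1 ll2) _)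
            (Nc.Nax _ _ (List.mem_cons.mpr (Or.inl happ.symm))))) ?_ ?_
      · apply Nc.ImpI
        refine orCase (A := ClausetoPropF c) (B := CNFtoPropF ll2)
          (Nc.ImpE _ _ _ (addclause_lem c ll2 _)
            (Nc.ImpE _ _ _ (cnf_app1 (AddClause c ll2) (Disjunct ll1 ll2) _)
              (Nc.Nax _ _ (List.mem_cons.mpr (Or.inr (List.mem_cons.mpr (Or.inl happ.symm))))))) ?_ ?_
        · exact Nc.ImpI _ _ _ (Nc.OrI1 _ _ _ (Nc.AndI _ _ _ hyp0 (Nc.Nax _ _ (List.mem_cons.mpr (Or.inr (List.mem_cons.mpr (Or.inl rfl)))))))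
        · exact Nc.ImpI _ _ _ (Nc.OrI2 _ _ _ hyp0)
      · exact Nc.ImpI _ _ _ (Nc.OrI2 _ _ _ hyp0)

theorem stmt7_aux (A : NNF V) : ∀ Γ : List (PropF V),
    Nc Γ ((CNFtoPropF (MakeCNF A)).Impl (NNFtoPropF A)) := by
  induction A with
  | NPos p =>
      intro Γ
      apply Nc.ImpI
      refine orCase (A := PropF.Var p) (B := PropF.Bot)
        (Nc.AndE1 _ _ PropF.Top hyp0) ?_ ?_
      · exact Nc.ImpI _ _ _ hyp0
      · exact Nc.ImpI _ _ _ (botE hyp0)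
  | NNeg p =>
      intro Γ
      apply Nc.ImpI
      refine orCase (A := (PropF.Var p).Neg) (B := PropF.Bot)
        (Nc.AndE1 _ _ PropF.Top hyp0) ?_ ?_
      · exact Nc.ImpI _ _ _ hyp0
      · exact Nc.ImpI _ _ _ (botE hyp0)
  | NBot =>
      intro Γ
      apply Nc.ImpI
      refine orCase (A := (PropF.Bot : PropF V)) (B := PropF.Bot)
        (Nc.AndE1 _ _ PropF.Top hyp0) ?_ ?_
      · exact Nc.ImpI _ _ _ hyp0
      · exact Nc.ImpI _ _ _ hyp0
  | NTop =>
      intro Γ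
      exact Nc.ImpI _ _ _ topNc
  | NConj B C ihB ihC =>
      intro Γ
      apply Nc.ImpI
      exact Nc.AndI _ _ _
        (Nc.ImpE _ _ _ (ihB _) (Nc.ImpE _ _ _ (cnf_app1 (MakeCNF B) (MakeCNF C) _) hyp0))
        (Nc.ImpE _ _ _ (ihC _) (Nc.ImpE _ _ _ (cnf_app2 (MakeCNF B) (MakeCNF C) _) hyp0))
  | NDisj B C ihB ihC =>
      intro Γ
      apply Nc.ImpI
      refine orCase (A := CNFtoPropF (MakeCNF B)) (B := CNFtoPropF (MakeCNF C))
        (Nc.ImpE _ _ _ (disjunct_lem (MakeCNF B) (MakeCNF C) _) hyp0) ?_ ?_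
      · exact Nc.ImpI _ _ _ (Nc.OrI1 _ _ _ (Nc.ImpE _ _ _ (ihB _) hyp0))
      · exact Nc.ImpI _ _ _ (Nc.OrI2 _ _ _ (Nc.ImpE _ _ _ (ihC _) hyp0))

theorem stmt7 {V : Type} [DecidableEq V] (A : NNF V) :
    Provable ((CNFtoPropF (MakeCNF A)).Impl (NNFtoPropF A)) := stmt7_aux A []
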